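/- At (p1, p2) = (0, 0), the partial derivative of the reactive player's payoff against a class A unbending strategy equals [b(1 - q2) + c][h_a(q2) - q4]q4 / (1 - q2 + q4)², where h_a(q2) = (bq2 - c)(1 - q2)/[b(1 - q2) + c]; in particular its sign equals the sign of h_a(q2) - q4. -/

import Mathlib

/-- The expected stationary payoff of the reactive player `p = [p1, p2, p1, p2]` against the
class A unbending strategy `q = [1, q2, 0, q4]` in the donation game, given by the
Press–Dyson determinant formula. -/
noncomputable def sX (b c q2 q4 p1 p2 : ℝ) : ℝ :=
  Matrix.det !![p1 * 1 - 1, p1 - 1, 1 - 1, b - c;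
                p2 * 0,     p2 - 1, 0,     -c;
                p1 * q2,    p1,     q2 - 1, b;
                p2 * q4,    p2,     q4,     0] /
  Matrix.det !![p1 * 1 - 1, p1 - 1, 1 - 1, 1;
                p2 * 0,     p2 - 1, 0,     1;
                p1 * q2,    p1,     q2 - 1, 1;
                p2 * q4,    p2,     q4,     1]

lemma sign_pos_mul (k x : ℝ) (hk : 0 < k) : Real.sign (k * x) = Real.sign x := by
  rcases lt_trichotomy x 0 with h | h | h
  · rw [Real.sign_of_neg h, Real.sign_of_neg (mul_neg_of_pos_of_neg hk h)]
  · simp [h]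
  · rw [Real.sign_of_pos h, Real.sign_of_pos (mul_pos hk h)]

lemma quad_hasDerivAt (a e f x : ℝ) :
    HasDerivAt (fun t : ℝ => a * t ^ 2 + e * t + f) (a * (2 * x) + e) x := by
  have h1 : HasDerivAt (fun t : ℝ => a * t ^ 2) (a * (2 * x)) x := by
    simpa using (hasDerivAt_pow 2 x).const_mul a
  have h2 : HasDerivAt (fun t : ℝ => e * t) e x := by
    simpa using (hasDerivAt_id x).const_mul e
  simpa using (h1.add h2).add_const f

/-- At `(p1, p2) = (0, 0)`, the partial derivative of the reactive player's payoff against a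
class A unbending strategy equals `[b(1 - q2) + c][h_a(q2) - q4]q4 / (1 - q2 + q4)²`, where
`h_a(q2) = (b q2 - c)(1 - q2)/[b(1 - q2) + c]`; in particular its sign equals the sign of
`h_a(q2) - q4`. -/
theorem stmt_13 (b c q2 q4 : ℝ) (hc : 0 < c) (hbc : c < b)
    (hq2l : (b - c) * c / (b ^ 2 + b * c - c ^ 2) < q2) (hq2u : q2 < 1)
    (hq4 : 0 < q4)
    (hq4' : q4 ≤ (b - c) * (1 - q2) * ((b ^ 2 + b * c - c ^ 2) * q2 - (b - c) * c) /
      (b * c ^ 2 * q2 ^ 2 - (b - c) * (b ^ 2 - b * c - c ^ 2) * q2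
        + (b - c) ^ 2 * (b + c))) :
    deriv (fun p1 => sX b c q2 q4 p1 0) 0 =
      (b * (1 - q2) + c) *
        ((b * q2 - c) * (1 - q2) / (b * (1 - q2) + c) - q4) * q4 / (1 - q2 + q4) ^ 2 ∧
    Real.sign (deriv (fun p1 => sX b c q2 q4 p1 0) 0) =
      Real.sign ((b * q2 - c) * (1 - q2) / (b * (1 - q2) + c) - q4) := by
  have hden : (0:ℝ) < 1 - q2 + q4 := by linarith
  have hK : (0:ℝ) < b * (1 - q2) + c := by nlinarith
  have hfun : (fun p1 => sX b c q2 q4 p1 0) =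
      fun p1 => (c * q4 * (q2 - 1) * p1 ^ 2 + q4 * (b * (1 - q2) + c) * p1 + (-(b * q4))) /
        (q4 * (1 - q2) * p1 ^ 2 + (1 - q2) * p1 + (-(1 - q2 + q4))) := by
    funext p1
    unfold sX
    simp [Matrix.det_succ_row_zero, Fin.sum_univ_succ, Fin.succAbove,
      show (Fin.castSucc 2 : Fin 4) = 2 from rfl]
    ring_nf
  have hN := quad_hasDerivAt (c * q4 * (q2 - 1)) (q4 * (b * (1 - q2) + c)) (-(b * q4)) 0
  have hD := quad_hasDerivAt (q4 * (1 - q2)) (1 - q2) (-(1 - q2 + q4)) 0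
  have hD0 : (q4 * (1 - q2) * (0:ℝ) ^ 2 + (1 - q2) * 0 + (-(1 - q2 + q4))) ≠ 0 := by
    simp only [ne_eq]
    norm_num
    linarith
  have hdiv := (hN.div hD hD0).deriv
  simp only [Pi.div_def] at hdiv
  have hderiv : deriv (fun p1 => sX b c q2 q4 p1 0) 0 =
      (b * (1 - q2) + c) *
        ((b * q2 - c) * (1 - q2) / (b * (1 - q2) + c) - q4) * q4 / (1 - q2 + q4) ^ 2 := by
    rw [hfun, hdiv]
    have h1 : (1 - q2 + q4) ≠ 0 := ne_of_gt hden
    have h2 : b * (1 - q2) + c ≠ 0 := ne_of_gt hK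
    have h3 : (q4 * (1 - q2) * (0:ℝ) ^ 2 + (1 - q2) * 0 + -(1 - q2 + q4)) ^ 2
        = (1 - q2 + q4) ^ 2 := by ring
    rw [h3, div_eq_div_iff (pow_ne_zero 2 h1) (pow_ne_zero 2 h1)]
    field_simp
    ring
  refine ⟨hderiv, ?_⟩
  rw [hderiv]
  have hrw : (b * (1 - q2) + c) *
        ((b * q2 - c) * (1 - q2) / (b * (1 - q2) + c) - q4) * q4 / (1 - q2 + q4) ^ 2
      = ((b * (1 - q2) + c) * q4 / (1 - q2 + q4) ^ 2) *
        ((b * q2 - c) * (1 - q2) / (b * (1 - q2) + c) - q4) := by ring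
  rw [hrw]
  exact sign_pos_mul _ _ (by positivity)
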